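/- arXiv:1202.4514 — 6 statements merged into one kernel-verified Lean document; each statement's English description precedes it below -/
import Mathlib

section
/- Gauss-Bonnet for graphs: For any finite simple graph G, the sum over all vertices x of the curvature K(x) = Σ_{k≥0} (-1)^k V_{k-1}(x)/(k+1) equals the Euler characteristic χ(G) = Σ_{k≥0} (-1)^k v_k. -/
open Finset SimpleGraph MeasureTheory
open scoped Classical

noncomputable section

variable {V : Type*} [Fintype V] [DecidableEq V]

/-- Number of cliques on `k` vertices in `G`. -/
def cliqueCount (G : SimpleGraph V) (k : ℕ) : ℕ := (G.cliqueFinset k).card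

/-- Number of cliques on `k` vertices contained in the unit sphere `S(x)`. -/
def sphereCliques (G : SimpleGraph V) (x : V) (k : ℕ) : ℕ :=
  ((G.cliqueFinset k).filter fun s => s ⊆ G.neighborFinset x).card

/-- Number of `k`-vertex cliques in the exit set `S_f^-(x)`. -/
def minusCliques (G : SimpleGraph V) (f : V → ℝ) (x : V) (k : ℕ) : ℕ :=
  ((G.cliqueFinset k).filter fun s => s ⊆ G.neighborFinset x ∧ ∀ y ∈ s, f y < f x).card

/-- Number of `k`-vertex cliques in the entrance set `S_f^+(x)`. -/
def plusCliques (G : SimpleGraph V) (f : V → ℝ) (x : V) (k : ℕ) : ℕ :=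
  ((G.cliqueFinset k).filter fun s => s ⊆ G.neighborFinset x ∧ ∀ y ∈ s, f x < f y).card

/-- Number of `k`-vertex cliques in `S(x)` with vertices both below and above `f x`. -/
def mixedCliques (G : SimpleGraph V) (f : V → ℝ) (x : V) (k : ℕ) : ℕ :=
  ((G.cliqueFinset k).filter fun s =>
    s ⊆ G.neighborFinset x ∧ (∃ y ∈ s, f y < f x) ∧ (∃ z ∈ s, f x < f z)).card

/-- Euler characteristic `χ(G) = Σ_k (-1)^k v_k`. -/
def eulerChar (G : SimpleGraph V) : ℤ :=
  ∑ k ∈ Finset.range (Fintype.card V + 1), (-1 : ℤ) ^ k * cliqueCount G (k + 1)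

/-- Euler characteristic of the exit set `S_f^-(x)`. -/
def chiMinus (G : SimpleGraph V) (f : V → ℝ) (x : V) : ℤ :=
  ∑ k ∈ Finset.range (Fintype.card V + 1), (-1 : ℤ) ^ k * minusCliques G f x (k + 1)

/-- Poincaré–Hopf index `i_f(x) = 1 - χ(S_f^-(x))`. -/
def pindex (G : SimpleGraph V) (f : V → ℝ) (x : V) : ℤ := 1 - chiMinus G f x

/-- Symmetric index `j_f(x) = (i_f(x) + i_{-f}(x))/2`. -/
def symIndex (G : SimpleGraph V) (f : V → ℝ) (x : V) : ℚ :=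
  ((pindex G f x : ℚ) + (pindex G (-f) x : ℚ)) / 2

/-- Curvature `K(x) = Σ_k (-1)^k V_{k-1}(x)/(k+1)`. -/
def curvature (G : SimpleGraph V) (x : V) : ℚ :=
  ∑ k ∈ Finset.range (Fintype.card V + 1),
    (-1 : ℚ) ^ k * (sphereCliques G x k : ℚ) / (k + 1)

/-- The uniform probability measure on `[-1,1]`. -/
def unif : Measure ℝ := (2 : ENNReal)⁻¹ • volume.restrict (Set.Icc (-1 : ℝ) 1)

/-- The product measure on `V → ℝ` with i.i.d. uniform `[-1,1]` coordinates. -/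
def uniMeasure (V : Type*) [Fintype V] : Measure (V → ℝ) := Measure.pi fun _ => unif


lemma sum_sphereCliques (G : SimpleGraph V) (k : ℕ) :
    ∑ x : V, sphereCliques G x k = (k + 1) * cliqueCount G (k + 1) := by
  classical
  have hL : ∑ x : V, sphereCliques G x k =
      ((Finset.univ : Finset V).sigma fun x =>
        (G.cliqueFinset k).filter fun s => s ⊆ G.neighborFinset x).card := by
    rw [Finset.card_sigma]; rfl
  have hR : (k + 1) * cliqueCount G (k + 1) =
      ((G.cliqueFinset (k + 1)).sigma fun t => t).card := by
    rw [Finset.card_sigma, cliqueCount]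
    rw [Finset.sum_congr rfl fun t ht => (SimpleGraph.mem_cliqueFinset_iff.mp ht).card_eq]
    rw [Finset.sum_const, smul_eq_mul, mul_comm]
  rw [hL, hR]
  apply Finset.card_bij' (fun p _ => (⟨insert p.1 p.2, p.1⟩ : (t : Finset V) × V))
    (fun q _ => (⟨q.2, q.1.erase q.2⟩ : (x : V) × Finset V))
  · rintro ⟨x, s⟩ hp
    simp only [Finset.mem_sigma, Finset.mem_filter, SimpleGraph.mem_cliqueFinset_iff] at hp ⊢
    obtain ⟨-, hs, hsub⟩ := hp
    have hx : x ∉ s := fun hxs => G.notMem_neighborFinset_self x (hsub hxs)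
    refine ⟨hs.insert fun b hb => (G.mem_neighborFinset x b).mp (hsub hb), ?_⟩
    exact Finset.mem_insert_self x s
  · rintro ⟨t, x⟩ hq
    simp only [Finset.mem_sigma, Finset.mem_filter, SimpleGraph.mem_cliqueFinset_iff,
      Finset.mem_univ, true_and] at hq ⊢
    obtain ⟨ht, hx⟩ := hq
    constructor
    · constructor
      · exact ht.1.subset (Finset.erase_subset x t)
      · rw [Finset.card_erase_of_mem hx, ht.2]; rfl
    · intro y hy
      rw [G.mem_neighborFinset]
      exact (ht.1 hx (Finset.mem_of_mem_erase hy) (Finset.ne_of_mem_erase hy).symm)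
  · rintro ⟨x, s⟩ hp
    simp only [Finset.mem_sigma, Finset.mem_filter] at hp
    obtain ⟨-, hs, hsub⟩ := hp
    have hx : x ∉ s := fun hxs => G.notMem_neighborFinset_self x (hsub hxs)
    simp [Finset.erase_insert hx]
  · rintro ⟨t, x⟩ hq
    simp only [Finset.mem_sigma] at hq
    simp [Finset.insert_erase hq.2]

/-- Gauss–Bonnet for graphs: `Σ_x K(x) = χ(G)`. -/
theorem gauss_bonnet (G : SimpleGraph V) :
    ∑ x : V, curvature G x = (eulerChar G : ℚ) := by
  unfold curvature
  rw [Finset.sum_comm]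
  rw [eulerChar]
  push_cast
  refine Finset.sum_congr rfl fun k _ => ?_
  have h : ∑ x : V, ((sphereCliques G x k : ℚ)) = (k + 1) * cliqueCount G (k + 1) := by
    rw [← Nat.cast_sum, sum_sphereCliques]; push_cast; ring
  rw [← Finset.sum_div, ← Finset.mul_sum, h]
  have : ((k : ℚ) + 1) ≠ 0 := by positivity
  field_simp

end
end

section
/- Intermediate equations: For a finite simple graph G, an injective function f : V → ℝ, and k ≥ 0, the sum over all vertices x of W_k(x), the number of (k+1)-vertex cliques in the unit sphere S(x) containing both a vertex y with f(y) < f(x) and a vertex z with f(z) > f(x), equals k · v_{k+1}, where v_{k+1} is the number of (k+2)-vertex cliques in G. -/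
open Finset SimpleGraph MeasureTheory
open scoped Classical

noncomputable section

variable {V : Type*} [Fintype V] [DecidableEq V]

/-- Intermediate equations: `Σ_x W_k(x) = k · v_{k+1}`. -/
theorem intermediate_equations (G : SimpleGraph V) (f : V → ℝ)
    (hf : Function.Injective f) (k : ℕ) :
    ∑ x : V, mixedCliques G f x (k + 1) = k * cliqueCount G (k + 2) := by
  classical
  -- key: each (k+2)-clique has exactly k non-extreme vertices
  have key : ∀ t ∈ G.cliqueFinset (k + 2),
      (t.filter fun x => (∃ y ∈ t, f y < f x) ∧ (∃ z ∈ t, f x < f z)).card = k := by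
    intro t ht
    rw [SimpleGraph.mem_cliqueFinset_iff] at ht
    have hcard : t.card = k + 2 := ht.2
    have hne : t.Nonempty := Finset.card_pos.mp (by omega)
    obtain ⟨m, hm, hmin⟩ := Finset.exists_min_image t f hne
    obtain ⟨M, hM, hmax⟩ := Finset.exists_max_image t f hne
    have hmM : m ≠ M := by
      intro h
      subst h
      have : ∀ x ∈ t, x = m := fun x hx =>
        hf (le_antisymm (hmax x hx) (hmin x hx))
      have : t ⊆ {m} := fun x hx => Finset.mem_singleton.mpr (this x hx)
      have := Finset.card_le_card this
      simp at this; omega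
    have hfilter : t.filter (fun x => ¬ ((∃ y ∈ t, f y < f x) ∧ (∃ z ∈ t, f x < f z)))
        = {m, M} := by
      ext x
      simp only [Finset.mem_filter, Finset.mem_insert, Finset.mem_singleton]
      constructor
      · rintro ⟨hx, hnp⟩
        rw [not_and_or] at hnp
        rcases hnp with h | h
        · push_neg at h
          exact Or.inl (hf (le_antisymm (h m hm) (hmin x hx)))
        · push_neg at h
          exact Or.inr (hf (le_antisymm (hmax x hx) (h M hM)))
      · rintro (rfl | rfl)
        · exact ⟨hm, fun ⟨⟨y, hy, hy'⟩, _⟩ => absurd (hmin y hy) (not_le.mpr hy')⟩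
        · exact ⟨hM, fun ⟨_, ⟨z, hz, hz'⟩⟩ => absurd (hmax z hz) (not_le.mpr hz')⟩
    have h2 : ({m, M} : Finset V).card = 2 := by
      rw [Finset.card_insert_of_notMem (by simpa using hmM), Finset.card_singleton]
    have := Finset.card_filter_add_card_filter_not
      (s := t) (p := fun x => (∃ y ∈ t, f y < f x) ∧ (∃ z ∈ t, f x < f z))
    rw [hfilter, h2, hcard] at this
    omega
  have hsig : ((Finset.univ : Finset V).sigma fun x =>
        (G.cliqueFinset (k + 1)).filter fun s =>
          s ⊆ G.neighborFinset x ∧ (∃ y ∈ s, f y < f x) ∧ (∃ z ∈ s, f x < f z)).card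
      = ((G.cliqueFinset (k + 2)).sigma fun t =>
          t.filter fun x => (∃ y ∈ t, f y < f x) ∧ (∃ z ∈ t, f x < f z)).card := by
    apply Finset.card_nbij' (fun p => (⟨insert p.1 p.2, p.1⟩ : Σ _ : Finset V, V))
      (fun q => (⟨q.2, q.1.erase q.2⟩ : Σ _ : V, Finset V))
    · rintro ⟨x, s⟩ hp
      simp only [Finset.mem_coe, Finset.mem_sigma, Finset.mem_filter, Finset.mem_univ, true_and,
        SimpleGraph.mem_cliqueFinset_iff] at hp ⊢
      obtain ⟨hs, hsub, ⟨y, hy, hy'⟩, ⟨z, hz, hz'⟩⟩ := hp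
      have hadj : ∀ b ∈ s, G.Adj x b := fun b hb =>
        (G.mem_neighborFinset x b).mp (hsub hb)
      refine ⟨hs.insert hadj, Finset.mem_insert_self _ _,
        ⟨y, Finset.mem_insert_of_mem hy, hy'⟩, ⟨z, Finset.mem_insert_of_mem hz, hz'⟩⟩
    · rintro ⟨t, x⟩ hq
      simp only [Finset.mem_coe, Finset.mem_sigma, Finset.mem_filter,
        SimpleGraph.mem_cliqueFinset_iff] at hq ⊢
      obtain ⟨ht, hx, ⟨y, hy, hy'⟩, ⟨z, hz, hz'⟩⟩ := hq
      have hyx : y ≠ x := fun h => by rw [h] at hy'; exact lt_irrefl _ hy'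
      have hzx : z ≠ x := fun h => by rw [h] at hz'; exact lt_irrefl _ hz'
      refine ⟨Finset.mem_univ x, ⟨ht.1.subset (Finset.erase_subset _ _), ?_⟩, ?_, ⟨y, Finset.mem_erase.mpr ⟨hyx, hy⟩, hy'⟩,
        ⟨z, Finset.mem_erase.mpr ⟨hzx, hz⟩, hz'⟩⟩
      · rw [Finset.card_erase_of_mem hx, ht.2]; omega
      · intro b hb
        rw [Finset.mem_erase] at hb
        exact (G.mem_neighborFinset x b).mpr (ht.1 hx (hb.2) (Ne.symm hb.1))
    · rintro ⟨x, s⟩ hp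
      simp only [Finset.mem_coe, Finset.mem_sigma, Finset.mem_filter, Finset.mem_univ, true_and] at hp
      have hxs : x ∉ s := fun h => G.irrefl ((G.mem_neighborFinset x x).mp (hp.2.1 h))
      simp [Finset.erase_insert hxs]
    · rintro ⟨t, x⟩ hq
      simp only [Finset.mem_coe, Finset.mem_sigma, Finset.mem_filter] at hq
      simp [Finset.insert_erase hq.2.1]
  calc ∑ x : V, mixedCliques G f x (k + 1)
      = ((Finset.univ : Finset V).sigma fun x =>
          (G.cliqueFinset (k + 1)).filter fun s =>
            s ⊆ G.neighborFinset x ∧ (∃ y ∈ s, f y < f x) ∧ (∃ z ∈ s, f x < f z)).card := by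
        rw [Finset.card_sigma]; rfl
    _ = ((G.cliqueFinset (k + 2)).sigma fun t =>
          t.filter fun x => (∃ y ∈ t, f y < f x) ∧ (∃ z ∈ t, f x < f z)).card := hsig
    _ = ∑ t ∈ G.cliqueFinset (k + 2),
          (t.filter fun x => (∃ y ∈ t, f y < f x) ∧ (∃ z ∈ t, f x < f z)).card :=
        Finset.card_sigma _ _
    _ = ∑ _t ∈ G.cliqueFinset (k + 2), k := Finset.sum_congr rfl key
    _ = k * cliqueCount G (k + 2) := by
        rw [Finset.sum_const, cliqueCount, Nat.mul_comm, smul_eq_mul]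

end
end

section
/- Poincaré-Hopf for graphs: For any finite simple graph G and any injective function f : V → ℝ, the sum over all vertices x of the index i_f(x) = 1 - χ(S_f^-(x)) equals the Euler characteristic χ(G), where S_f^-(x) is the subgraph induced by the neighbors y of x with f(y) < f(x). -/
open Finset SimpleGraph MeasureTheory
open scoped Classical

noncomputable section

variable {V : Type*} [Fintype V] [DecidableEq V]

lemma key_sum (G : SimpleGraph V) (f : V → ℝ) (hf : Function.Injective f) (m : ℕ) :
    ∑ x : V, minusCliques G f x m = cliqueCount G (m + 1) := by
  classical
  unfold minusCliques cliqueCount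
  rw [← Finset.card_sigma]
  apply Finset.card_bij (fun p _ => insert p.1 p.2)
  · rintro ⟨x, s⟩ hp
    simp only [Finset.mem_sigma, Finset.mem_filter, mem_cliqueFinset_iff] at hp
    obtain ⟨-, hs, hsub, -⟩ := hp
    have hx : x ∉ s := fun h => G.notMem_neighborFinset_self x (hsub h)
    rw [mem_cliqueFinset_iff]
    exact hs.insert fun y hy => (G.mem_neighborFinset x y).1 (hsub hy)
  · rintro ⟨x, s⟩ h1 ⟨x', s'⟩ h2 heq
    simp only [Finset.mem_sigma, Finset.mem_filter, mem_cliqueFinset_iff] at h1 h2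
    obtain ⟨-, hs, hsub, hlt⟩ := h1
    obtain ⟨-, hs', hsub', hlt'⟩ := h2
    have hx : x ∉ s := fun h => G.notMem_neighborFinset_self x (hsub h)
    have hx' : x' ∉ s' := fun h => G.notMem_neighborFinset_self x' (hsub' h)
    have hxx : x = x' := by
      by_contra hne
      have h1 : x ∈ insert x' s' := heq ▸ Finset.mem_insert_self x s
      have h2 : x' ∈ insert x s := heq ▸ Finset.mem_insert_self x' s'
      have hxs' : x ∈ s' := (Finset.mem_insert.1 h1).resolve_left hne
      have hx's : x' ∈ s := (Finset.mem_insert.1 h2).resolve_left fun h => hne h.symm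
      exact absurd (hlt' x hxs') (not_lt.2 (hlt x' hx's).le)
    subst hxx
    have : s = s' := by
      have := congrArg (fun t => Finset.erase t x) heq
      simpa [Finset.erase_insert hx, Finset.erase_insert hx'] using this
    simp [this]
  · intro t ht
    rw [mem_cliqueFinset_iff] at ht
    have hne : t.Nonempty := by
      rw [← Finset.card_pos, ht.2]; omega
    obtain ⟨x, hxt, hmax⟩ := t.exists_max_image f hne
    refine ⟨⟨x, t.erase x⟩, ?_, ?_⟩
    · simp only [Finset.mem_sigma, Finset.mem_filter, mem_cliqueFinset_iff]
      refine ⟨Finset.mem_univ x, ⟨ht.1.subset (Finset.erase_subset x t), ?_⟩, ?_, ?_⟩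
      · rw [Finset.card_erase_of_mem hxt, ht.2]; omega
      · intro y hy
        rw [G.mem_neighborFinset]
        exact ht.1 hxt (Finset.mem_of_mem_erase hy) (Finset.ne_of_mem_erase hy).symm
      · intro y hy
        exact lt_of_le_of_ne (hmax y (Finset.mem_of_mem_erase hy))
          fun h => Finset.ne_of_mem_erase hy (hf h)
    · exact Finset.insert_erase hxt

lemma cliqueCount_one (G : SimpleGraph V) : cliqueCount G 1 = Fintype.card V := by
  classical
  unfold cliqueCount
  rw [← Finset.card_univ]
  refine (Finset.card_bij (fun (x : V) _ => ({x} : Finset V)) ?_ ?_ ?_).symm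
  · intro x _
    rw [mem_cliqueFinset_iff]
    exact ⟨by simp [SimpleGraph.isClique_iff, Set.Pairwise], by simp⟩
  · intro a _ b _ h
    exact Finset.singleton_injective h
  · intro s hs
    rw [mem_cliqueFinset_iff] at hs
    obtain ⟨a, rfl⟩ := Finset.card_eq_one.1 hs.2
    exact ⟨a, Finset.mem_univ a, rfl⟩

lemma cliqueCount_large (G : SimpleGraph V) (m : ℕ) (hm : Fintype.card V < m) :
    cliqueCount G m = 0 := by
  classical
  unfold cliqueCount
  rw [Finset.card_eq_zero, Finset.eq_empty_iff_forall_notMem]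
  intro s hs
  rw [mem_cliqueFinset_iff] at hs
  have := Finset.card_le_univ s
  rw [hs.2] at this
  omega

/-- Poincaré–Hopf for graphs: `Σ_x i_f(x) = χ(G)`. -/
theorem poincare_hopf (G : SimpleGraph V) (f : V → ℝ) (hf : Function.Injective f) :
    ∑ x : V, pindex G f x = eulerChar G := by
  classical
  unfold pindex
  rw [Finset.sum_sub_distrib]
  have hchi : ∑ x : V, chiMinus G f x
      = ∑ k ∈ Finset.range (Fintype.card V + 1),
          (-1 : ℤ) ^ k * cliqueCount G (k + 2) := by
    unfold chiMinus
    rw [Finset.sum_comm]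
    refine Finset.sum_congr rfl fun k _ => ?_
    rw [← Finset.mul_sum, ← Nat.cast_sum, key_sum G f hf (k + 1)]
  set n := Fintype.card V with hn
  have h1 : ∑ k ∈ Finset.range (n + 1), (-1 : ℤ) ^ k * cliqueCount G (k + 2)
      = ∑ k ∈ Finset.range n, (-1 : ℤ) ^ k * cliqueCount G (k + 2) := by
    rw [Finset.sum_range_succ, cliqueCount_large G (n + 2) (by omega)]
    simp
  have h2 : eulerChar G
      = ∑ k ∈ Finset.range n, (-1 : ℤ) ^ (k + 1) * cliqueCount G (k + 2) + (n : ℤ) := by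
    unfold eulerChar
    rw [Finset.sum_range_succ', ← hn]
    norm_num [cliqueCount_one]
    rfl
  rw [hchi, h1, h2, Finset.sum_const, Finset.card_univ, ← hn]
  have hS : ∑ k ∈ Finset.range n, (-1 : ℤ) ^ (k + 1) * cliqueCount G (k + 2)
      = -∑ k ∈ Finset.range n, (-1 : ℤ) ^ k * cliqueCount G (k + 2) := by
    rw [← Finset.sum_neg_distrib]
    exact Finset.sum_congr rfl fun k _ => by ring_nf
  rw [hS]
  ring

end
end

section
/- Averaging equation: Let G be a finite simple graph with vertex set V of size n, and let f = (f(v))_{v∈V} be chosen with independent uniform([-1,1]) coordinates (injective almost surely). Then for every vertex x and every k ≥ 0, the expected number of (k+1)-vertex cliques in S_f^-(x) (the subgraph induced by neighbors y of x with f(y) < f(x)) equals V_k(x)/(k+2), where V_k(x) is the number of (k+1)-cliques in the subgraph induced by the neighbors of x. -/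
open Finset SimpleGraph MeasureTheory
open scoped Classical

noncomputable section

variable {V : Type*} [Fintype V] [DecidableEq V]

instance : IsProbabilityMeasure unif := by
  constructor
  rw [unif, Measure.smul_apply, Measure.restrict_apply_univ, Real.volume_Icc]
  norm_num
  exact ENNReal.inv_mul_cancel two_ne_zero ENNReal.ofNat_ne_top

instance : NullSingletonClass unif := by
  constructor
  intro x
  rw [unif, Measure.smul_apply, Measure.restrict_apply (measurableSet_singleton x)]
  have : volume ({x} ∩ Set.Icc (-1:ℝ) 1) = 0 :=
    measure_mono_null Set.inter_subset_left (measure_singleton x)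
  simp [this]

instance : IsProbabilityMeasure (uniMeasure V) := by
  rw [uniMeasure]; infer_instance

lemma ties_null (a b : V) (hab : a ≠ b) :
    uniMeasure V {f : V → ℝ | f a = f b} = 0 := by
  set p : V → Prop := fun v => v = a with hp
  set e := MeasurableEquiv.piEquivPiSubtypeProd (fun _ : V => ℝ) p with he
  have hmp := measurePreserving_piEquivPiSubtypeProd (fun _ : V => unif) p
  have hS : MeasurableSet {f : V → ℝ | f a = f b} :=
    measurableSet_eq_fun (measurable_pi_apply a) (measurable_pi_apply b)
  have h2 := (MeasurePreserving.symm e hmp).measure_preimage hS.nullMeasurableSet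
  rw [uniMeasure, ← h2]
  have hb' : ¬ p b := fun h => hab h.symm
  have hpre : (⇑e.symm ⁻¹' {f : V → ℝ | f a = f b}) =
      {q : (∀ _ : {v // p v}, ℝ) × (∀ _ : {v // ¬ p v}, ℝ) |
        q.1 ⟨a, rfl⟩ = q.2 ⟨b, hb'⟩} := by
    ext q
    have h1 : e.symm q a = q.1 ⟨a, rfl⟩ := by
      show (Equiv.piEquivPiSubtypeProd p (fun _ => ℝ)).symm q a = _
      rw [Equiv.piEquivPiSubtypeProd_symm_apply, dif_pos rfl]
    have h2 : e.symm q b = q.2 ⟨b, hb'⟩ := by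
      show (Equiv.piEquivPiSubtypeProd p (fun _ => ℝ)).symm q b = _
      rw [Equiv.piEquivPiSubtypeProd_symm_apply, dif_neg hb']
    simp only [Set.mem_preimage, Set.mem_setOf_eq, h1, h2]
  rw [hpre]
  have hm1 : Measurable (fun q : (∀ _ : {v // p v}, ℝ) × (∀ _ : {v // ¬ p v}, ℝ) =>
      q.1 ⟨a, rfl⟩) := (measurable_pi_apply _).comp measurable_fst
  have hm2 : Measurable (fun q : (∀ _ : {v // p v}, ℝ) × (∀ _ : {v // ¬ p v}, ℝ) =>
      q.2 ⟨b, hb'⟩) := (measurable_pi_apply _).comp measurable_snd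
  have hE : MeasurableSet {q : (∀ _ : {v // p v}, ℝ) × (∀ _ : {v // ¬ p v}, ℝ) |
      q.1 ⟨a, rfl⟩ = q.2 ⟨b, hb'⟩} := measurableSet_eq_fun hm1 hm2
  rw [Measure.prod_apply hE]
  have hz : ∀ g : (∀ _ : {v // p v}, ℝ),
      (Measure.pi fun _ : {v // ¬ p v} => unif) {h | g ⟨a, rfl⟩ = h ⟨b, hb'⟩} = 0 := by
    intro g
    have : {h : ∀ _ : {v // ¬ p v}, ℝ | g ⟨a, rfl⟩ = h ⟨b, hb'⟩}
        = {h | h ⟨b, hb'⟩ = g ⟨a, rfl⟩} := by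
      ext h; exact eq_comm
    rw [this]
    exact Measure.pi_hyperplane _ _ _
  simp [Set.preimage_setOf_eq, hz]

lemma measurable_Aset (T : Finset V) (w : V) :
    MeasurableSet {f : V → ℝ | ∀ z ∈ T, z ≠ w → f z < f w} := by
  have : {f : V → ℝ | ∀ z ∈ T, z ≠ w → f z < f w}
      = ⋂ z ∈ (T : Set V), ⋂ (_ : z ≠ w), {f | f z < f w} := by
    ext f; simp
  rw [this]
  refine MeasurableSet.biInter (Set.to_countable _) fun z _ => ?_
  exact MeasurableSet.iInter fun _ =>
    measurableSet_lt (measurable_pi_apply z) (measurable_pi_apply w)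

lemma measure_A_swap (T : Finset V) {y w : V} (hy : y ∈ T) (hw : w ∈ T) :
    uniMeasure V {f : V → ℝ | ∀ z ∈ T, z ≠ w → f z < f w}
      = uniMeasure V {f : V → ℝ | ∀ z ∈ T, z ≠ y → f z < f y} := by
  set σ := Equiv.swap y w with hσ
  set F := MeasurableEquiv.piCongrLeft (fun _ : V => ℝ) σ with hF
  have hmp : MeasurePreserving F (uniMeasure V) (uniMeasure V) :=
    measurePreserving_piCongrLeft (α := fun _ : V => ℝ) (fun _ : V => unif) σ
  have hFapp : ∀ (f : V → ℝ) (i : V), F f i = f (σ.symm i) := by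
    intro f i
    have := MeasurableEquiv.piCongrLeft_apply_apply (β := fun _ : V => ℝ) σ f (σ.symm i)
    simpa using this
  have hpre : ⇑F ⁻¹' {f : V → ℝ | ∀ z ∈ T, z ≠ w → f z < f w}
      = {f : V → ℝ | ∀ z ∈ T, z ≠ y → f z < f y} := by
    ext f
    have hσw : σ.symm w = y := by simp [hσ, Equiv.symm_swap, Equiv.swap_apply_right]
    have hmem : ∀ u ∈ T, σ u ∈ T := by
      intro u hu
      by_cases h1 : u = y
      · subst h1; simpa [hσ, Equiv.swap_apply_left] using hw
      · by_cases h2 : u = w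
        · subst h2; simpa [hσ, Equiv.swap_apply_right] using hy
        · simpa [hσ, Equiv.swap_apply_of_ne_of_ne h1 h2] using hu
    simp only [Set.mem_preimage, Set.mem_setOf_eq, hFapp]
    constructor
    · intro h u huT huy
      have hz : σ u ∈ T := hmem u huT
      have hzw : σ u ≠ w := by
        intro hc
        apply huy
        have := congrArg σ.symm hc
        rwa [Equiv.symm_apply_apply, hσw] at this
      have := h (σ u) hz hzw
      rwa [hσw, Equiv.symm_apply_apply] at this
    · intro h z hzT hzw
      have h1 : σ.symm z ∈ T := by
        have := hmem z hzT
        rwa [show σ.symm = σ from by simp [hσ, Equiv.symm_swap]]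
      have h2 : σ.symm z ≠ y := by
        intro hc
        apply hzw
        have := congrArg σ hc
        rw [Equiv.apply_symm_apply] at this
        simpa [hσ, Equiv.swap_apply_left] using this
      have := h (σ.symm z) h1 h2
      rwa [hσw]
  rw [← hmp.measure_preimage (measurable_Aset T w).nullMeasurableSet, hpre]

lemma measure_strictMax (T : Finset V) {y : V} (hy : y ∈ T) :
    uniMeasure V {f : V → ℝ | ∀ z ∈ T, z ≠ y → f z < f y}
      = ((T.card : ENNReal))⁻¹ := by
  classical
  set A : V → Set (V → ℝ) := fun w => {f | ∀ z ∈ T, z ≠ w → f z < f w} with hA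
  have hAm : ∀ w, MeasurableSet (A w) := fun w => measurable_Aset T w
  -- the union has full measure
  have hcompl : uniMeasure V (⋃ w ∈ T, A w)ᶜ = 0 := by
    have hsub : (⋃ w ∈ T, A w)ᶜ ⊆
        ⋃ (a : V) (b : V) (_ : a ≠ b), {f : V → ℝ | f a = f b} := by
      intro f hf
      simp only [Set.mem_compl_iff, Set.mem_iUnion, not_exists] at hf
      obtain ⟨m, hmT, hm⟩ := T.exists_max_image f ⟨y, hy⟩
      have : f ∉ A m := fun h => hf m hmT h
      rw [hA] at this
      simp only [Set.mem_setOf_eq, not_forall] at this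
      obtain ⟨z, hzT, hzm, hnlt⟩ := this
      have : f z = f m := le_antisymm (hm z hzT) (not_lt.1 hnlt)
      simp only [Set.mem_iUnion]
      exact ⟨z, m, hzm, this⟩
    refine measure_mono_null hsub ?_
    refine measure_iUnion_null fun a => measure_iUnion_null fun b => ?_
    refine measure_iUnion_null fun hab => ties_null a b hab
  have hunion : uniMeasure V (⋃ w ∈ T, A w) = 1 := by
    have hU : MeasurableSet (⋃ w ∈ T, A w) :=
      MeasurableSet.biUnion T.countable_toSet fun w _ => hAm w
    have := measure_compl hU (measure_ne_top (uniMeasure V) _)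
    rw [hcompl, measure_univ] at this
    have hle : uniMeasure V (⋃ w ∈ T, A w) ≤ 1 := prob_le_one
    have : (1 : ENNReal) ≤ uniMeasure V (⋃ w ∈ T, A w) := by
      rwa [eq_comm, tsub_eq_zero_iff_le] at this
    exact le_antisymm hle this
  have hdisj : (↑T : Set V).PairwiseDisjoint A := by
    intro a ha b hb hab
    refine Set.disjoint_left.2 fun f hfa hfb => ?_
    have h1 : f b < f a := hfa b hb (Ne.symm hab)
    have h2 : f a < f b := hfb a ha hab
    exact absurd (h1.trans h2) (lt_irrefl _)
  have hsum : ∑ w ∈ T, uniMeasure V (A w) = 1 := by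
    rw [← measure_biUnion_finset hdisj fun w _ => hAm w, hunion]
  have hconst : ∀ w ∈ T, uniMeasure V (A w) = uniMeasure V (A y) :=
    fun w hw => measure_A_swap T hy hw
  rw [Finset.sum_congr rfl hconst, Finset.sum_const, nsmul_eq_mul] at hsum
  have hcard : (T.card : ENNReal) ≠ 0 := by
    simpa using Finset.card_ne_zero_of_mem hy
  have := congrArg (fun t => (T.card : ENNReal)⁻¹ * t) hsum
  simp only [← mul_assoc, ENNReal.inv_mul_cancel hcard (ENNReal.natCast_ne_top _),
    one_mul, mul_one] at this
  exact this

/-- Averaging equation: `E[V_k^-(x)] = V_k(x)/(k+2)`. -/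
theorem averaging_equation (G : SimpleGraph V) (x : V) (k : ℕ) :
    (∫ f, (minusCliques G f x (k + 1) : ℝ) ∂(uniMeasure V)) =
      (sphereCliques G x (k + 1) : ℝ) / (k + 2) := by
  classical
  set A := (G.cliqueFinset (k+1)).filter (fun s => s ⊆ G.neighborFinset x) with hAdef
  set B : Finset V → Set (V → ℝ) := fun s => {g : V → ℝ | ∀ y ∈ s, g y < g x} with hB
  have hBm : ∀ s : Finset V, MeasurableSet (B s) := by
    intro s
    have : B s = ⋂ y ∈ (s : Set V), {g : V → ℝ | g y < g x} := by ext g; simp [hB]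
    rw [this]
    exact MeasurableSet.biInter (Set.to_countable _) fun y _ =>
      measurableSet_lt (measurable_pi_apply y) (measurable_pi_apply x)
  have hcount : ∀ f : V → ℝ, (minusCliques G f x (k+1) : ℝ)
      = ∑ s ∈ A, Set.indicator (B s) (fun _ => (1:ℝ)) f := by
    intro f
    rw [minusCliques]
    rw [show ((G.cliqueFinset (k+1)).filter fun s => s ⊆ G.neighborFinset x ∧ ∀ y ∈ s, f y < f x)
        = A.filter (fun s => ∀ y ∈ s, f y < f x) from by rw [hAdef, Finset.filter_filter]]
    rw [Finset.card_filter]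
    push_cast
    refine Finset.sum_congr rfl fun s hs => ?_
    by_cases h : ∀ y ∈ s, f y < f x
    · simp [h, Set.indicator_apply, hB, Set.mem_setOf_eq]
    · simp [h, Set.indicator_apply, hB, Set.mem_setOf_eq]
  have hmeas : ∀ s ∈ A, (uniMeasure V) (B s) = (((k:ℕ)+2 : ℕ) : ENNReal)⁻¹ := by
    intro s hs
    rw [hAdef, Finset.mem_filter] at hs
    obtain ⟨hs1, hs2⟩ := hs
    have hcard : s.card = k + 1 := ((SimpleGraph.mem_cliqueFinset_iff).1 hs1).card_eq
    have hxs : x ∉ s := by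
      intro hx
      have := hs2 hx
      rw [SimpleGraph.mem_neighborFinset] at this
      exact G.irrefl this
    have hset : B s = {f : V → ℝ | ∀ z ∈ insert x s, z ≠ x → f z < f x} := by
      ext f
      simp only [hB, Set.mem_setOf_eq, Finset.mem_insert]
      constructor
      · rintro h z (rfl | hz) hzx
        · exact absurd rfl hzx
        · exact h z hz
      · intro h y hy
        exact h y (Or.inr hy) (fun hc => hxs (hc ▸ hy))
    rw [hset, measure_strictMax (insert x s) (Finset.mem_insert_self x s),
      Finset.card_insert_of_notMem hxs, hcard]
  have hint : ∀ s ∈ A, Integrable (Set.indicator (B s) (fun _ => (1:ℝ))) (uniMeasure V) :=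
    fun s _ => (integrable_const (1:ℝ)).indicator (hBm s)
  have hAcard : A.card = sphereCliques G x (k+1) := rfl
  calc ∫ f, (minusCliques G f x (k+1) : ℝ) ∂(uniMeasure V)
      = ∫ f, ∑ s ∈ A, Set.indicator (B s) (fun _ => (1:ℝ)) f ∂(uniMeasure V) := by
        simp_rw [hcount]
    _ = ∑ s ∈ A, ∫ f, Set.indicator (B s) (fun _ => (1:ℝ)) f ∂(uniMeasure V) :=
        integral_finset_sum A hint
    _ = ∑ s ∈ A, ((uniMeasure V) (B s)).toReal := by
        refine Finset.sum_congr rfl fun s hs => ?_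
        exact integral_indicator_one (hBm s)
    _ = ∑ s ∈ A, ((((k:ℕ)+2 : ℕ) : ENNReal)⁻¹).toReal := by
        exact Finset.sum_congr rfl fun s hs => by rw [hmeas s hs]
    _ = (A.card : ℝ) * (((k:ℕ)+2 : ℝ))⁻¹ := by
        rw [Finset.sum_const, nsmul_eq_mul, ENNReal.toReal_inv]
        simp only [ENNReal.toReal_natCast]
        push_cast
        ring
    _ = (sphereCliques G x (k + 1) : ℝ) / (k + 2) := by
        rw [hAcard]
        push_cast
        ring

end
end

section
/- Index expectation equals curvature: Let G be a finite simple graph, and let f have independent uniform([-1,1]) values on the vertices. Then for every vertex x, E[i_f(x)] = K(x), where i_f(x) = 1 - χ(S_f^-(x)) and K(x) = Σ_{k≥0} (-1)^k V_{k-1}(x)/(k+1). -/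
open Finset SimpleGraph MeasureTheory
open scoped Classical

noncomputable section

variable {V : Type*} [Fintype V] [DecidableEq V]

open scoped ENNReal

instance inst_s12 : IsProbabilityMeasure unif := by
  constructor
  rw [unif, Measure.smul_apply, Measure.restrict_apply MeasurableSet.univ, Set.univ_inter,
    Real.volume_Icc]
  norm_num
  exact ENNReal.inv_mul_cancel (by norm_num) (by norm_num)

lemma unif_Iio {t : ℝ} (h1 : -1 ≤ t) (h2 : t ≤ 1) :
    unif (Set.Iio t) = ENNReal.ofReal ((t + 1) / 2) := by
  have : Set.Iio t ∩ Set.Icc (-1 : ℝ) 1 = Set.Ico (-1 : ℝ) t := by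
    ext u
    constructor
    · rintro ⟨hu1, hu2, hu3⟩; exact ⟨hu2, hu1⟩
    · rintro ⟨hu1, hu2⟩; exact ⟨hu2, hu1, le_of_lt (lt_of_lt_of_le hu2 h2)⟩
  rw [unif, Measure.smul_apply, Measure.restrict_apply measurableSet_Iio, this, Real.volume_Ico,
    smul_eq_mul]
  rw [show t - (-1) = t + 1 by ring, show (t+1)/2 = 2⁻¹ * (t+1) by ring,
    ENNReal.ofReal_mul (by norm_num)]
  have : ENNReal.ofReal ((2:ℝ)⁻¹) = 2⁻¹ := by
    rw [ENNReal.ofReal_inv_of_pos (by norm_num)]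
    norm_num
  rw [this]

lemma unif_lint_pow (m : ℕ) :
    ∫⁻ t, (unif (Set.Iio t)) ^ m ∂unif = ENNReal.ofReal (1 / (m + 1)) := by
  have hcong : ∀ t ∈ Set.Icc (-1 : ℝ) 1,
      (unif (Set.Iio t)) ^ m = ENNReal.ofReal (((t + 1) / 2) ^ m) := by
    intro t ht
    rw [unif_Iio ht.1 ht.2, ← ENNReal.ofReal_pow (by linarith [ht.1] : (0:ℝ) ≤ (t+1)/2)]
  have h0 : ∀ᵐ t ∂(volume.restrict (Set.Icc (-1:ℝ) 1)),
      unif (Set.Iio t) ^ m = ENNReal.ofReal (((t + 1) / 2) ^ m) :=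
    (ae_restrict_mem measurableSet_Icc).mono fun t ht => hcong t ht
  have hae : ∀ᵐ t ∂unif, unif (Set.Iio t) ^ m = ENNReal.ofReal (((t + 1) / 2) ^ m) := by
    rw [unif]; exact Measure.ae_smul_measure h0 _
  rw [lintegral_congr_ae hae, unif, lintegral_smul_measure]
  have hint : IntegrableOn (fun t : ℝ => ((t + 1) / 2) ^ m) (Set.Icc (-1 : ℝ) 1) volume := by
    apply Continuous.integrableOn_Icc
    continuity
  rw [← ofReal_integral_eq_lintegral_ofReal hint
    ((ae_restrict_mem measurableSet_Icc).mono fun t ht => pow_nonneg (by linarith [ht.1]) m)]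
  have : ∫ t in Set.Icc (-1 : ℝ) 1, ((t + 1) / 2) ^ m = 2 / (m + 1) := by
    rw [MeasureTheory.integral_Icc_eq_integral_Ioc,
      ← intervalIntegral.integral_of_le (by norm_num : (-1:ℝ) ≤ 1)]
    have h1 := intervalIntegral.integral_comp_add_right (a := (-1:ℝ)) (b := 1)
      (fun u : ℝ => (u / 2) ^ m) 1
    have h2 := intervalIntegral.integral_comp_div (a := (0:ℝ)) (b := 2) (c := 2)
      (fun u : ℝ => u ^ m) (by norm_num)
    norm_num at h1 h2
    rw [h1, h2, div_eq_mul_inv]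
  rw [this, show (2:ℝ)/(m+1) = 2 * (1/(m+1)) by ring,
    ENNReal.ofReal_mul (by norm_num), show ((2:ENNReal))⁻¹ = (ENNReal.ofReal 2)⁻¹ by norm_num,
    smul_eq_mul, ← mul_assoc, ENNReal.inv_mul_cancel (by simp) (by simp), one_mul]

lemma uniMeasure_lt_set (s : Finset V) (x : V) (hx : x ∉ s) :
    uniMeasure V {f : V → ℝ | ∀ y ∈ s, f y < f x}
      = ENNReal.ofReal (1 / (s.card + 1)) := by
  classical
  set A := {f : V → ℝ | ∀ y ∈ s, f y < f x} with hA_def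
  have hA : MeasurableSet A := by
    have : A = ⋂ y ∈ (s : Set V), {f : V → ℝ | f y < f x} := by
      ext f; simp [hA_def]
    rw [this]
    exact MeasurableSet.biInter (s : Set V).to_countable fun y _ =>
      measurableSet_lt (measurable_pi_apply y) (measurable_pi_apply x)
  set F : (V → ℝ) → ℝ≥0∞ := A.indicator 1 with hF
  have hFm : Measurable F := measurable_const.indicator hA
  rw [uniMeasure, ← lintegral_indicator_one hA,
    lintegral_eq_lmarginal_univ (μ := fun _ : V => unif) (0 : V → ℝ),
    show (univ : Finset V) = insert x ((univ : Finset V).erase x) from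
      (insert_erase (mem_univ x)).symm,
    lmarginal_insert _ hFm (notMem_erase x univ)]
  have inner : ∀ t : ℝ,
      (∫⋯∫⁻_((univ : Finset V).erase x), F ∂(fun _ : V => unif))
        (Function.update (0 : V → ℝ) x t) = (unif (Set.Iio t)) ^ s.card := by
    intro t
    set E := (univ : Finset V).erase x with hE
    have hxE : x ∉ E := notMem_erase x univ
    have hsE : s ⊆ E := fun y hy => mem_erase.2 ⟨fun h => hx (h ▸ hy), mem_univ y⟩
    rw [lmarginal]
    have hint : ∀ y : ∀ _ : ↥E, ℝ,
        F (Function.updateFinset (Function.update (0 : V → ℝ) x t) E y)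
          = (Set.univ.pi fun i : ↥E =>
              if (i : V) ∈ s then Set.Iio t else (Set.univ : Set ℝ)).indicator 1 y := by
      intro y
      have hmem : Function.updateFinset (Function.update (0 : V → ℝ) x t) E y ∈ A
          ↔ y ∈ Set.univ.pi fun i : ↥E =>
              if (i : V) ∈ s then Set.Iio t else (Set.univ : Set ℝ) := by
        simp only [hA_def, Set.mem_setOf_eq, Set.mem_pi, Set.mem_univ, forall_true_left]
        constructor
        · intro h i
          by_cases hi : (i : V) ∈ s
          · simp only [hi, if_true, Set.mem_Iio]
            have := h (i : V) hi
            rw [Function.updateFinset, dif_pos (hsE hi), Function.updateFinset,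
              dif_neg hxE, Function.update_self] at this
            convert this using 2
          · simp [hi]
        · intro h y' hy'
          have := h ⟨y', hsE hy'⟩
          simp only [hy', if_true, Set.mem_Iio] at this
          rw [Function.updateFinset, dif_pos (hsE hy'), Function.updateFinset,
            dif_neg hxE, Function.update_self]
          exact this
      simp only [hF, Set.indicator_apply, hmem, Pi.one_apply]
    rw [lintegral_congr hint,
      lintegral_indicator_one (MeasurableSet.univ_pi fun i => by
        split <;> [exact measurableSet_Iio; exact MeasurableSet.univ]),
      Measure.pi_pi]
    calc (∏ i : ↥E, unif (if (i : V) ∈ s then Set.Iio t else Set.univ))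
        = ∏ i : ↥E, (fun v : V => if v ∈ s then unif (Set.Iio t) else 1) (i : V) := by
          refine Finset.prod_congr rfl fun i _ => ?_
          by_cases hi : (i : V) ∈ s <;> simp [hi]
      _ = ∏ v ∈ E, (if v ∈ s then unif (Set.Iio t) else 1) :=
          Finset.prod_coe_sort E (fun v => if v ∈ s then unif (Set.Iio t) else 1)
      _ = ∏ v ∈ E.filter (· ∈ s), unif (Set.Iio t) := (Finset.prod_filter _ _).symm
      _ = unif (Set.Iio t) ^ s.card := by
          rw [Finset.prod_const, Finset.filter_mem_eq_inter,
            Finset.inter_eq_right.mpr hsE]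
  calc (∫⁻ t, (∫⋯∫⁻_((univ : Finset V).erase x), F ∂(fun _ : V => unif))
        (Function.update (0 : V → ℝ) x t) ∂unif)
      = ∫⁻ t, (unif (Set.Iio t)) ^ s.card ∂unif := lintegral_congr inner
    _ = ENNReal.ofReal (1 / (s.card + 1)) := unif_lint_pow s.card


/-- Index expectation is curvature: `E[i_f(x)] = K(x)`. -/
theorem index_expectation_is_curvature (G : SimpleGraph V) (x : V) :
    (∫ f, (pindex G f x : ℝ) ∂(uniMeasure V)) = (curvature G x : ℝ) := by
  classical
  have hprob : IsProbabilityMeasure (uniMeasure V) := by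
    rw [uniMeasure]; infer_instance
  set n := Fintype.card V with hn
  set C : ℕ → Finset (Finset V) :=
    fun k => (G.cliqueFinset k).filter (fun s => s ⊆ G.neighborFinset x) with hC
  -- measurability of the elementary events
  have hAmeas : ∀ s : Finset V, MeasurableSet {f : V → ℝ | ∀ y ∈ s, f y < f x} := by
    intro s
    have : {f : V → ℝ | ∀ y ∈ s, f y < f x}
        = ⋂ y ∈ (s : Set V), {f : V → ℝ | f y < f x} := by ext f; simp
    rw [this]
    exact MeasurableSet.biInter (s : Set V).to_countable fun y _ =>
      measurableSet_lt (measurable_pi_apply y) (measurable_pi_apply x)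
  have hindic : ∀ s : Finset V, (fun f : V → ℝ => if ∀ y ∈ s, f y < f x then (1:ℝ) else 0)
      = Set.indicator {f : V → ℝ | ∀ y ∈ s, f y < f x} (fun _ => (1:ℝ)) := by
    intro s; funext f; rw [Set.indicator_apply]; rfl
  have hintg : ∀ s : Finset V,
      Integrable (fun f : V → ℝ => if ∀ y ∈ s, f y < f x then (1:ℝ) else 0) (uniMeasure V) := by
    intro s
    rw [hindic s]
    exact (integrable_const (1:ℝ)).indicator (hAmeas s)
  -- pointwise formula for the index
  have hpt : (fun f : V → ℝ => (pindex G f x : ℝ))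
      = fun f => 1 - ∑ k ∈ Finset.range (n+1), (-1:ℝ)^k *
          ∑ s ∈ C (k+1), (if ∀ y ∈ s, f y < f x then (1:ℝ) else 0) := by
    funext f
    rw [pindex, chiMinus]
    push_cast
    congr 1
    refine Finset.sum_congr rfl fun k _ => ?_
    congr 1
    rw [minusCliques,
      show ((G.cliqueFinset (k+1)).filter fun s =>
          s ⊆ G.neighborFinset x ∧ ∀ y ∈ s, f y < f x)
        = (C (k+1)).filter fun s => ∀ y ∈ s, f y < f x from
        (Finset.filter_filter _ _ _).symm,
      Finset.card_filter]
    push_cast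
    rfl
  -- value of each elementary integral
  have hval : ∀ k : ℕ, ∀ s ∈ C (k+1),
      ∫ f, (if ∀ y ∈ s, f y < f x then (1:ℝ) else 0) ∂(uniMeasure V) = 1/(k+2) := by
    intro k s hs
    obtain ⟨hclique, hsub⟩ := Finset.mem_filter.mp hs
    have hxs : x ∉ s := fun h => (G.notMem_neighborFinset_self x) (hsub h)
    have hcard : s.card = k+1 := ((G.mem_cliqueFinset_iff).mp hclique).card_eq
    rw [hindic s, MeasureTheory.integral_indicator_const (1:ℝ) (hAmeas s),
      measureReal_def, uniMeasure_lt_set s x hxs, hcard, smul_eq_mul, mul_one]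
    rw [ENNReal.toReal_ofReal (by positivity)]
    push_cast
    ring
  -- compute the integral
  rw [hpt, integral_sub (integrable_const 1)
      (integrable_finset_sum _ fun k _ =>
        (integrable_finset_sum _ fun s _ => hintg s).const_mul _),
    integral_const, integral_finset_sum _ fun k _ =>
      (integrable_finset_sum _ fun s _ => hintg s).const_mul _]
  simp only [measure_univ, probReal_univ, ENNReal.toReal_one, smul_eq_mul, one_mul]
  have hterm : ∀ k ∈ Finset.range (n+1),
      (∫ f, (-1:ℝ)^k * ∑ s ∈ C (k+1), (if ∀ y ∈ s, f y < f x then (1:ℝ) else 0)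
        ∂(uniMeasure V))
      = (-1:ℝ)^k * (sphereCliques G x (k+1) : ℝ) * (1/(k+2)) := by
    intro k _
    rw [integral_const_mul, integral_finset_sum _ fun s _ => hintg s,
      Finset.sum_congr rfl (hval k)]
    rw [Finset.sum_const, nsmul_eq_mul]
    rw [show ((C (k+1)).card : ℝ) = (sphereCliques G x (k+1) : ℝ) from rfl]
    ring
  rw [Finset.sum_congr rfl hterm]
  -- final algebra
  have h0 : sphereCliques G x 0 = 1 := by
    rw [sphereCliques]
    have : ((G.cliqueFinset 0).filter fun s => s ⊆ G.neighborFinset x) = {∅} := by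
      ext t
      simp only [Finset.mem_filter, SimpleGraph.mem_cliqueFinset_iff,
        SimpleGraph.isNClique_zero, Finset.mem_singleton, and_iff_left_iff_imp]
      rintro rfl
      exact Finset.empty_subset _
    rw [this, Finset.card_singleton]
  have hbig : sphereCliques G x (n+1) = 0 := by
    rw [sphereCliques, Finset.card_eq_zero, Finset.eq_empty_iff_forall_notMem]
    intro t ht
    obtain ⟨hclique, -⟩ := Finset.mem_filter.mp ht
    have h1 := ((G.mem_cliqueFinset_iff).mp hclique).card_eq
    have h2 := Finset.card_le_univ t
    rw [h1] at h2
    omega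
  rw [curvature]
  push_cast
  rw [Finset.sum_range_succ' (fun k => (-1:ℝ)^k * (sphereCliques G x k : ℝ) / (k+1)) n,
    Finset.sum_range_succ (fun k => (-1:ℝ)^k * (sphereCliques G x (k+1) : ℝ) * (1/(k+2))) n,
    hbig, h0]
  have hconv : ∀ k ∈ Finset.range n,
      (-1:ℝ)^(k+1) * (sphereCliques G x (k+1) : ℝ) / (((k+1 : ℕ) : ℝ)+1)
        = -((-1:ℝ)^k * (sphereCliques G x (k+1) : ℝ) * (1/((k:ℝ)+2))) := by
    intro k _
    push_cast
    ring
  rw [Finset.sum_congr rfl hconv, Finset.sum_neg_distrib]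
  push_cast
  ring

end
end

section
/- For a finite simple graph in which every unit sphere S(x) is a cycle graph, the curvature at every vertex equals K(x) = 1 - deg(x)/6, and for any injective f the index equals i_f(x) = 1 - s_f(x)/2, where s_f(x) is the number of sign changes of y ↦ f(y) - f(x) along the cycle S(x). -/
open Finset SimpleGraph MeasureTheory
open scoped Classical

noncomputable section

set_option linter.unusedSectionVars false

variable {V : Type*} [Fintype V] [DecidableEq V]

/-! ### Auxiliary lemmas -/

open Fin.CommRing in
private lemma cycle_no_triangle {m : ℕ} (hm : 4 ≤ m) {a b c : Fin m}
    (hab : (cycleGraph m).Adj a b) (hac : (cycleGraph m).Adj a c)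
    (hbc : (cycleGraph m).Adj b c) : False := by
  obtain ⟨n, rfl⟩ : ∃ n, m = n + 2 := ⟨m - 2, by omega⟩
  rw [cycleGraph_adj] at hab hac hbc
  have h1 : (1 : Fin (n + 2)) ≠ 0 := by
    intro h
    have := congrArg Fin.val h
    simp at this
  have h3 : (3 : Fin (n + 2)) ≠ 0 := by
    intro h
    have h3' : (3 : Fin (n + 2)) = ((3 : ℕ) : Fin (n + 2)) := by norm_cast
    rw [h3', Fin.ext_iff, Fin.val_natCast] at h
    have : 3 % (n + 2) = 3 := Nat.mod_eq_of_lt (by omega)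
    simp [this] at h
  rcases hab with h1' | h1' <;> rcases hbc with h2' | h2' <;> rcases hac with h3' | h3' <;>
    first
      | exact h1 (by linear_combination h1' + h2' - h3')
      | exact h1 (by linear_combination -h1' - h2' + h3')
      | exact h1 (by linear_combination h1' - h2' - h3')
      | exact h1 (by linear_combination -h1' + h2' + h3')
      | exact h1 (by linear_combination -h1' + h2' - h3')
      | exact h1 (by linear_combination h1' - h2' + h3')
      | exact h3 (by linear_combination -h1' - h2' - h3')
      | exact h3 (by linear_combination h1' + h2' + h3')

private lemma cycle_nbhd_card {m : ℕ} (hm : 3 ≤ m) (u : Fin m) :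
    Fintype.card ((cycleGraph m).neighborSet u) = 2 := by
  obtain ⟨n, rfl⟩ : ∃ n, m = n + 3 := ⟨m - 3, by omega⟩
  rw [card_neighborSet_eq_degree, cycleGraph_degree_three_le]

private lemma sphere_degree (G : SimpleGraph V) (x : V) (hm : 4 ≤ G.degree x)
    (e : (G.induce (G.neighborSet x)) ≃g cycleGraph (G.degree x))
    {v : V} (hv : v ∈ G.neighborFinset x) :
    ((G.neighborFinset x).filter fun w => G.Adj v w).card = 2 := by
  rw [mem_neighborFinset] at hv
  let v' : G.neighborSet x := ⟨v, hv⟩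
  have equiv1 : {w // w ∈ (G.neighborFinset x).filter fun w => G.Adj v w} ≃
      ((G.induce (G.neighborSet x)).neighborSet v') :=
    { toFun := fun w => ⟨⟨w.1, by
        have := w.2; rw [Finset.mem_filter, mem_neighborFinset] at this; exact this.1⟩, by
        have := w.2; rw [Finset.mem_filter] at this
        exact this.2⟩
      invFun := fun u => ⟨u.1.1, by
        rw [Finset.mem_filter, mem_neighborFinset]
        exact ⟨u.1.2, u.2⟩⟩
      left_inv := fun w => rfl
      right_inv := fun u => rfl }
  calc ((G.neighborFinset x).filter fun w => G.Adj v w).card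
      = Fintype.card {w // w ∈ (G.neighborFinset x).filter fun w => G.Adj v w} :=
        (Fintype.card_coe _).symm
    _ = Fintype.card ((G.induce (G.neighborSet x)).neighborSet v') := Fintype.card_congr equiv1
    _ = Fintype.card ((cycleGraph (G.degree x)).neighborSet (e v')) :=
        Fintype.card_congr (e.mapNeighborSet v')
    _ = 2 := cycle_nbhd_card (by omega) _

private lemma isNClique_pair {G : SimpleGraph V} {a b : V} (h : G.Adj a b) :
    G.IsNClique 2 {a, b} := by
  have h1 : G.IsNClique 1 {b} := isNClique_one.2 ⟨b, rfl⟩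
  have := h1.insert (a := a) (fun c hc => by
    rw [Finset.mem_singleton] at hc; subst hc; exact h)
  simpa using this

private lemma isNClique_two_iff {G : SimpleGraph V} {s : Finset V} :
    G.IsNClique 2 s ↔ ∃ a b, G.Adj a b ∧ s = {a, b} := by
  constructor
  · rintro ⟨hc, hcard⟩
    obtain ⟨a, b, hab, rfl⟩ := Finset.card_eq_two.1 hcard
    exact ⟨a, b, hc (by simp) (by simp) hab, rfl⟩
  · rintro ⟨a, b, hab, rfl⟩
    exact isNClique_pair hab

private lemma pair_eq_pair_iff' {a b c d : V} :
    ({a, b} : Finset V) = {c, d} ↔ (a = c ∧ b = d) ∨ (a = d ∧ b = c) := by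
  rw [← Finset.coe_inj]
  push_cast
  exact Set.pair_eq_pair_iff

private lemma double_count (G : SimpleGraph V) (x : V) (P : V → Prop)
    (hdeg : ∀ v ∈ G.neighborFinset x,
      ((G.neighborFinset x).filter fun w => G.Adj v w).card = 2)
    (A : Finset V) (hA : ∀ v, v ∈ A ↔ v ∈ G.neighborFinset x ∧ P v)
    (B : Finset (Finset V))
    (hB : ∀ s, s ∈ B ↔ G.IsNClique 2 s ∧ (s ⊆ G.neighborFinset x ∧ ∀ y ∈ s, P y))
    (C : Finset (Finset V))
    (hC : ∀ s, s ∈ C ↔ G.IsNClique 2 s ∧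
      (s ⊆ G.neighborFinset x ∧ (∃ y ∈ s, P y) ∧ (∃ z ∈ s, ¬ P z))) :
    2 * A.card = 2 * B.card + C.card := by
  classical
  have hA' : A = (G.neighborFinset x).filter P := by
    ext v; rw [hA, Finset.mem_filter]
  have hB' : B = (G.cliqueFinset 2).filter fun s =>
      s ⊆ G.neighborFinset x ∧ ∀ y ∈ s, P y := by
    ext s; rw [hB, Finset.mem_filter, mem_cliqueFinset_iff]
  have hC' : C = (G.cliqueFinset 2).filter fun s =>
      s ⊆ G.neighborFinset x ∧ (∃ y ∈ s, P y) ∧ (∃ z ∈ s, ¬ P z) := by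
    ext s; rw [hC, Finset.mem_filter, mem_cliqueFinset_iff]
  subst hA' hB' hC'
  set S := G.neighborFinset x with hS
  set T : Finset (V × V) :=
    ((S.filter P) ×ˢ S).filter (fun z => G.Adj z.1 z.2) with hT
  have step1 : T.card = 2 * (S.filter P).card := by
    rw [Finset.card_eq_sum_card_fiberwise (f := Prod.fst) (t := S.filter P)
      (fun z hz => by
        rw [Finset.mem_coe] at hz
        rw [hT, Finset.mem_filter, Finset.mem_product] at hz
        exact hz.1.1)]
    calc ∑ v ∈ S.filter P, (T.filter fun z => z.1 = v).card
        = ∑ v ∈ S.filter P, 2 := by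
          refine Finset.sum_congr rfl (fun v hv => ?_)
          have hv' : v ∈ S := Finset.filter_subset _ _ hv
          have himg : T.filter (fun z => z.1 = v)
              = (S.filter (G.Adj v)).image (fun w => (v, w)) := by
            ext z
            simp only [hT, Finset.mem_filter, Finset.mem_product, Finset.mem_image]
            constructor
            · rintro ⟨⟨⟨-, h2⟩, h3⟩, rfl⟩
              exact ⟨z.2, ⟨h2, h3⟩, rfl⟩
            · rintro ⟨w, ⟨hw1, hw2⟩, rfl⟩
              exact ⟨⟨⟨Finset.mem_filter.1 hv, hw1⟩, hw2⟩, rfl⟩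
          rw [himg, Finset.card_image_of_injective _ (fun w w' hh => by
            simpa using congrArg Prod.snd hh)]
          exact hdeg v hv'
      _ = 2 * (S.filter P).card := by rw [Finset.sum_const, smul_eq_mul, mul_comm]
  have step2 : (T.filter fun z => P z.2).card + (T.filter fun z => ¬ P z.2).card = T.card :=
    Finset.card_filter_add_card_filter_not _
  have step3 : (T.filter fun z => P z.2).card =
      2 * ((G.cliqueFinset 2).filter fun s => s ⊆ S ∧ ∀ y ∈ s, P y).card := by
    rw [Finset.card_eq_sum_card_fiberwise
      (f := fun z : V × V => ({z.1, z.2} : Finset V))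
      (t := (G.cliqueFinset 2).filter fun s => s ⊆ S ∧ ∀ y ∈ s, P y)
      (fun z hz => by
        rw [Finset.mem_coe] at hz
        simp only [hT, Finset.mem_filter, Finset.mem_product] at hz
        obtain ⟨⟨⟨⟨h1, hp1⟩, h3⟩, hadj⟩, hp2⟩ := hz
        refine Finset.mem_filter.2 ⟨mem_cliqueFinset_iff.2 (isNClique_pair hadj), ?_, ?_⟩
        · intro y hy
          rcases Finset.mem_insert.1 hy with rfl | hy
          · exact h1
          · rw [Finset.mem_singleton] at hy; subst hy; exact h3
        · intro y hy
          rcases Finset.mem_insert.1 hy with rfl | hy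
          · exact hp1
          · rw [Finset.mem_singleton] at hy; subst hy; exact hp2)]
    calc ∑ s ∈ (G.cliqueFinset 2).filter (fun s => s ⊆ S ∧ ∀ y ∈ s, P y),
          ((T.filter fun z => P z.2).filter fun z => ({z.1, z.2} : Finset V) = s).card
        = ∑ _s ∈ (G.cliqueFinset 2).filter (fun s => s ⊆ S ∧ ∀ y ∈ s, P y), 2 := by
          refine Finset.sum_congr rfl (fun s hs => ?_)
          rw [Finset.mem_filter, mem_cliqueFinset_iff] at hs
          obtain ⟨hclique, hsub, hall⟩ := hs
          obtain ⟨a, b, hab, rfl⟩ := isNClique_two_iff.1 hclique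
          have hne : a ≠ b := hab.ne
          have key : ((T.filter fun z => P z.2).filter
              fun z => ({z.1, z.2} : Finset V) = {a, b}) = {(a, b), (b, a)} := by
            ext z
            simp only [Finset.mem_filter, hT, Finset.mem_product, Finset.mem_insert,
              Finset.mem_singleton]
            constructor
            · rintro ⟨⟨⟨⟨-, -⟩, -⟩, -⟩, hpair⟩
              rcases pair_eq_pair_iff'.1 hpair with ⟨h1, h2⟩ | ⟨h1, h2⟩
              · left; exact Prod.ext h1 h2
              · right; exact Prod.ext h1 h2
            · have ha : a ∈ S := hsub (by simp)
              have hb : b ∈ S := hsub (by simp)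
              have hpa : P a := hall a (by simp)
              have hpb : P b := hall b (by simp)
              rintro (rfl | rfl)
              · exact ⟨⟨⟨⟨⟨ha, hpa⟩, hb⟩, hab⟩, hpb⟩, rfl⟩
              · exact ⟨⟨⟨⟨⟨hb, hpb⟩, ha⟩, hab.symm⟩, hpa⟩, by
                  rw [pair_eq_pair_iff']; right; exact ⟨rfl, rfl⟩⟩
          rw [key, Finset.card_insert_of_notMem (by simp [Prod.ext_iff, hne]),
            Finset.card_singleton]
      _ = 2 * ((G.cliqueFinset 2).filter fun s => s ⊆ S ∧ ∀ y ∈ s, P y).card := by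
          rw [Finset.sum_const, smul_eq_mul, mul_comm]
  have step4 : (T.filter fun z => ¬ P z.2).card =
      ((G.cliqueFinset 2).filter fun s =>
        s ⊆ S ∧ (∃ y ∈ s, P y) ∧ (∃ z ∈ s, ¬ P z)).card := by
    rw [Finset.card_eq_sum_card_fiberwise
      (f := fun z : V × V => ({z.1, z.2} : Finset V))
      (t := (G.cliqueFinset 2).filter fun s =>
        s ⊆ S ∧ (∃ y ∈ s, P y) ∧ (∃ z ∈ s, ¬ P z))
      (fun z hz => by
        rw [Finset.mem_coe] at hz
        simp only [hT, Finset.mem_filter, Finset.mem_product] at hz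
        obtain ⟨⟨⟨⟨h1, hp1⟩, h3⟩, hadj⟩, hp2⟩ := hz
        refine Finset.mem_filter.2 ⟨mem_cliqueFinset_iff.2 (isNClique_pair hadj), ?_,
          ⟨z.1, by simp, hp1⟩, ⟨z.2, by simp, hp2⟩⟩
        intro y hy
        rcases Finset.mem_insert.1 hy with rfl | hy
        · exact h1
        · rw [Finset.mem_singleton] at hy; subst hy; exact h3)]
    calc ∑ s ∈ (G.cliqueFinset 2).filter (fun s =>
            s ⊆ S ∧ (∃ y ∈ s, P y) ∧ (∃ z ∈ s, ¬ P z)),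
          ((T.filter fun z => ¬ P z.2).filter fun z => ({z.1, z.2} : Finset V) = s).card
        = ∑ _s ∈ (G.cliqueFinset 2).filter (fun s =>
            s ⊆ S ∧ (∃ y ∈ s, P y) ∧ (∃ z ∈ s, ¬ P z)), 1 := by
          refine Finset.sum_congr rfl (fun s hs => ?_)
          rw [Finset.mem_filter, mem_cliqueFinset_iff] at hs
          obtain ⟨hclique, hsub, ⟨y₀, hy₀, hpy₀⟩, ⟨z₀, hz₀, hpz₀⟩⟩ := hs
          obtain ⟨a, b, hab, rfl⟩ := isNClique_two_iff.1 hclique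
          have hne : a ≠ b := hab.ne
          have ha : a ∈ S := hsub (by simp)
          have hb : b ∈ S := hsub (by simp)
          have hcases : (P a ∧ ¬ P b) ∨ (P b ∧ ¬ P a) := by
            by_cases hpa : P a
            · refine Or.inl ⟨hpa, fun hpb => ?_⟩
              rcases Finset.mem_insert.1 hz₀ with rfl | hz₀'
              · exact hpz₀ hpa
              · rw [Finset.mem_singleton] at hz₀'; subst hz₀'; exact hpz₀ hpb
            · refine Or.inr ⟨?_, hpa⟩
              rcases Finset.mem_insert.1 hy₀ with rfl | hy₀'
              · exact absurd hpy₀ hpa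
              · rw [Finset.mem_singleton] at hy₀'; subst hy₀'; exact hpy₀
          rcases hcases with ⟨hpa, hpb⟩ | ⟨hpb, hpa⟩
          · have key : ((T.filter fun z => ¬ P z.2).filter
                fun z => ({z.1, z.2} : Finset V) = {a, b}) = {(a, b)} := by
              ext z
              simp only [Finset.mem_filter, hT, Finset.mem_product, Finset.mem_singleton]
              constructor
              · rintro ⟨⟨⟨⟨⟨-, hq1⟩, -⟩, -⟩, hq2⟩, hpair⟩
                rcases pair_eq_pair_iff'.1 hpair with ⟨h1, h2⟩ | ⟨h1, h2⟩
                · exact Prod.ext h1 h2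
                · exact absurd (h1 ▸ hq1) hpb
              · rintro rfl
                exact ⟨⟨⟨⟨⟨ha, hpa⟩, hb⟩, hab⟩, hpb⟩, rfl⟩
            rw [key, Finset.card_singleton]
          · have key : ((T.filter fun z => ¬ P z.2).filter
                fun z => ({z.1, z.2} : Finset V) = {a, b}) = {(b, a)} := by
              ext z
              simp only [Finset.mem_filter, hT, Finset.mem_product, Finset.mem_singleton]
              constructor
              · rintro ⟨⟨⟨⟨⟨-, hq1⟩, -⟩, -⟩, hq2⟩, hpair⟩
                rcases pair_eq_pair_iff'.1 hpair with ⟨h1, h2⟩ | ⟨h1, h2⟩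
                · exact absurd (h1 ▸ hq1) hpa
                · exact Prod.ext h1 h2
              · rintro rfl
                exact ⟨⟨⟨⟨⟨hb, hpb⟩, ha⟩, hab.symm⟩, hpa⟩, by
                  rw [pair_eq_pair_iff']; right; exact ⟨rfl, rfl⟩⟩
            rw [key, Finset.card_singleton]
      _ = ((G.cliqueFinset 2).filter fun s =>
            s ⊆ S ∧ (∃ y ∈ s, P y) ∧ (∃ z ∈ s, ¬ P z)).card := by
          rw [Finset.sum_const, smul_eq_mul, mul_one]
  omega

/-- If every unit sphere `S(x)` is a cycle graph (of length `deg(x) ≥ 4`), then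
`K(x) = 1 - deg(x)/6` and `i_f(x) = 1 - s_f(x)/2`, where `s_f(x)` is the number of sign
changes of `y ↦ f(y) - f(x)` along the cycle `S(x)`, i.e. the number of edges of `S(x)`
with one endpoint below and one above `f(x)`. -/
theorem sphere_cycle_curvature_index (G : SimpleGraph V)
    (h : ∀ x : V, 4 ≤ G.degree x ∧
      Nonempty ((G.induce (G.neighborSet x)) ≃g SimpleGraph.cycleGraph (G.degree x)))
    (f : V → ℝ) (hf : Function.Injective f) (x : V) :
    curvature G x = 1 - (G.degree x : ℚ) / 6 ∧
    (pindex G f x : ℚ) = 1 - (mixedCliques G f x 2 : ℚ) / 2 := by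
  classical
  obtain ⟨hm4, ⟨e⟩⟩ := h x
  have hScard : (G.neighborFinset x).card = G.degree x := G.card_neighborFinset_eq_degree x
  have hdeg : ∀ v ∈ G.neighborFinset x,
      ((G.neighborFinset x).filter fun w => G.Adj v w).card = 2 :=
    fun v hv => sphere_degree G x hm4 e hv
  -- triangle-freeness of the sphere
  have htri : ∀ a b c : V, a ∈ G.neighborFinset x → b ∈ G.neighborFinset x →
      c ∈ G.neighborFinset x →
      G.Adj a b → G.Adj a c → G.Adj b c → False := by
    intro a b c ha hb hc hab hac hbc
    rw [mem_neighborFinset] at ha hb hc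
    let a' : G.neighborSet x := ⟨a, ha⟩
    let b' : G.neighborSet x := ⟨b, hb⟩
    let c' : G.neighborSet x := ⟨c, hc⟩
    have hab' : (G.induce (G.neighborSet x)).Adj a' b' := hab
    have hac' : (G.induce (G.neighborSet x)).Adj a' c' := hac
    have hbc' : (G.induce (G.neighborSet x)).Adj b' c' := hbc
    exact cycle_no_triangle hm4 (e.map_adj_iff.2 hab') (e.map_adj_iff.2 hac')
      (e.map_adj_iff.2 hbc')
  -- no cliques of size ≥ 3 in the sphere
  have hbig : ∀ k, 3 ≤ k → sphereCliques G x k = 0 := by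
    intro k hk
    rw [sphereCliques, Finset.card_eq_zero, Finset.eq_empty_iff_forall_notMem]
    intro s hs
    rw [Finset.mem_filter, mem_cliqueFinset_iff] at hs
    obtain ⟨hclique, hsub⟩ := hs
    obtain ⟨t, hts, htcard⟩ := Finset.exists_subset_card_eq (hclique.2 ▸ hk)
    obtain ⟨a, b, c, hab, hac, hbc, rfl⟩ := Finset.card_eq_three.1 htcard
    refine htri a b c (hsub (hts (by simp))) (hsub (hts (by simp))) (hsub (hts (by simp)))
      (hclique.1 ?_ ?_ hab) (hclique.1 ?_ ?_ hac) (hclique.1 ?_ ?_ hbc) <;>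
      exact Finset.mem_coe.2 (hts (by simp))
  have hminusbig : ∀ k, 3 ≤ k → minusCliques G f x k = 0 := by
    intro k hk
    have hle : minusCliques G f x k ≤ sphereCliques G x k :=
      Finset.card_le_card (Finset.monotone_filter_right _ (fun s _ hs => hs.1))
    have := hbig k hk
    omega
  -- small counts
  have h0 : sphereCliques G x 0 = 1 := by
    rw [sphereCliques]
    have : (G.cliqueFinset 0).filter (fun s => s ⊆ G.neighborFinset x) = {∅} := by
      ext s
      simp only [Finset.mem_filter, mem_cliqueFinset_iff, isNClique_zero, Finset.mem_singleton]
      constructor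
      · rintro ⟨rfl, -⟩; rfl
      · rintro rfl; exact ⟨rfl, Finset.empty_subset _⟩
    rw [this, Finset.card_singleton]
  have h1c : sphereCliques G x 1 = G.degree x := by
    rw [sphereCliques]
    have him : (G.cliqueFinset 1).filter (fun s => s ⊆ G.neighborFinset x)
        = (G.neighborFinset x).image (fun v => ({v} : Finset V)) := by
      ext s
      simp only [Finset.mem_filter, mem_cliqueFinset_iff, isNClique_one, Finset.mem_image]
      constructor
      · rintro ⟨⟨a, rfl⟩, hsub⟩
        exact ⟨a, hsub (by simp), rfl⟩
      · rintro ⟨a, ha, rfl⟩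
        exact ⟨⟨a, rfl⟩, Finset.singleton_subset_iff.2 ha⟩
    rw [him, Finset.card_image_of_injective _ Finset.singleton_injective, hScard]
  have h2c : sphereCliques G x 2 = G.degree x := by
    have hd := double_count G x (fun _ => True) hdeg
      (G.neighborFinset x) (fun v => by simp)
      ((G.cliqueFinset 2).filter fun s => s ⊆ G.neighborFinset x)
      (fun s => by rw [Finset.mem_filter, mem_cliqueFinset_iff]; simp)
      ∅ (fun s => by simp)
    simp only [Finset.card_empty, add_zero] at hd
    rw [hScard] at hd
    rw [sphereCliques]
    omega
  -- counting with P = (f · < f x)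
  set a := ((G.neighborFinset x).filter fun v => f v < f x).card with hadef
  have hm1 : minusCliques G f x 1 = a := by
    rw [minusCliques]
    have him : ((G.cliqueFinset 1).filter fun s =>
        s ⊆ G.neighborFinset x ∧ ∀ y ∈ s, f y < f x)
        = ((G.neighborFinset x).filter fun v => f v < f x).image
            (fun v => ({v} : Finset V)) := by
      ext s
      simp only [Finset.mem_filter, mem_cliqueFinset_iff, isNClique_one, Finset.mem_image]
      constructor
      · rintro ⟨⟨v, rfl⟩, hsub, hlt⟩
        exact ⟨v, ⟨hsub (by simp), hlt v (by simp)⟩, rfl⟩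
      · rintro ⟨v, hv, rfl⟩
        exact ⟨⟨v, rfl⟩, Finset.singleton_subset_iff.2 hv.1, by
          intro y hy
          rw [Finset.mem_singleton] at hy
          subst hy
          exact hv.2⟩
    rw [him, Finset.card_image_of_injective _ Finset.singleton_injective]
  have hkey : 2 * a = 2 * minusCliques G f x 2 + mixedCliques G f x 2 := by
    have hd := double_count G x (fun v => f v < f x) hdeg
      ((G.neighborFinset x).filter fun v => f v < f x)
      (fun v => by rw [Finset.mem_filter])
      ((G.cliqueFinset 2).filter fun s =>
        s ⊆ G.neighborFinset x ∧ ∀ y ∈ s, f y < f x)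
      (fun s => by rw [Finset.mem_filter, mem_cliqueFinset_iff])
      ((G.cliqueFinset 2).filter fun s =>
        s ⊆ G.neighborFinset x ∧ (∃ y ∈ s, f y < f x) ∧ (∃ z ∈ s, f x < f z))
      (fun s => by
        rw [Finset.mem_filter, mem_cliqueFinset_iff]
        refine and_congr_right fun _ => and_congr_right fun hsub =>
          and_congr_right fun _ => ?_
        constructor
        · rintro ⟨z, hz, hzx⟩
          exact ⟨z, hz, not_lt.2 hzx.le⟩
        · rintro ⟨z, hz, hzx⟩
          refine ⟨z, hz, ?_⟩
          have hadjz : G.Adj x z := (mem_neighborFinset _ _ _).1 (hsub hz)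
          have hne : f z ≠ f x := fun hh => hadjz.ne' (hf hh)
          exact lt_of_le_of_ne (not_lt.1 hzx) (Ne.symm hne))
    rw [minusCliques, mixedCliques]
    exact hd
  -- total vertex count bound
  have hcardV : G.degree x ≤ Fintype.card V := by
    calc G.degree x = (G.neighborFinset x).card := hScard.symm
      _ ≤ Fintype.card V := Finset.card_le_univ _
  -- curvature computation
  have hcurv : curvature G x = ∑ k ∈ Finset.range 3,
      (-1 : ℚ) ^ k * (sphereCliques G x k : ℚ) / (k + 1) := by
    rw [curvature]
    refine (Finset.sum_subset (Finset.range_subset_range.2 (by omega)) (fun k hk hk' => ?_)).symm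
    rw [Finset.mem_range] at hk hk'
    rw [hbig k (by omega)]
    simp
  -- chiMinus computation
  have hchi : chiMinus G f x = (a : ℤ) - (minusCliques G f x 2 : ℤ) := by
    rw [chiMinus]
    have : ∑ k ∈ Finset.range (Fintype.card V + 1),
        (-1 : ℤ) ^ k * minusCliques G f x (k + 1)
        = ∑ k ∈ Finset.range 2, (-1 : ℤ) ^ k * minusCliques G f x (k + 1) := by
      refine (Finset.sum_subset (Finset.range_subset_range.2 (by omega)) (fun k hk hk' => ?_)).symm
      rw [Finset.mem_range] at hk hk'
      rw [hminusbig (k + 1) (by omega)]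
      simp
    rw [this, Finset.sum_range_succ, Finset.sum_range_one, hm1]
    push_cast
    ring
  constructor
  · rw [hcurv, Finset.sum_range_succ, Finset.sum_range_succ, Finset.sum_range_one,
      h0, h1c, h2c]
    push_cast
    ring
  · rw [pindex, hchi]
    have hkeyQ : (2 : ℚ) * a = 2 * minusCliques G f x 2 + mixedCliques G f x 2 := by
      exact_mod_cast hkey
    push_cast
    linarith

end
end
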